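/- The join of two box-product equivalence relations in the lattice of equivalence relations on a product is the box product of the componentwise joins: (⊠ᵢ R_i) ∨ (⊠ᵢ S_i) = ⊠ᵢ (R_i ∨ S_i), where ∨ denotes the join (transitive closure of union) in the respective lattices of equivalence relations, for equivalence relations R_i, S_i on D_i, i ∈ {0,…,n}. -/

import Mathlib

/-- The box product of a family of equivalence relations: `u` and `v` are related iff
they are componentwise related. -/
def boxProd {n : ℕ} {D : Fin (n + 1) → Type*} (R : ∀ i, Setoid (D i)) :
    Setoid (∀ i, D i) where
  r u v := ∀ i, R i (u i) (v i)
  iseqv := ⟨fun u i => (R i).refl (u i), fun h i => (R i).symm (h i),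
    fun h h' i => (R i).trans (h i) (h' i)⟩

lemma boxProd_single {n : ℕ} {D : Fin (n + 1) → Type*}
    (R S : ∀ i, Setoid (D i)) (i₀ : Fin (n + 1)) {a b : D i₀}
    (h : (R i₀ ⊔ S i₀) a b) (x : ∀ i, D i) :
    (boxProd R ⊔ boxProd S) (Function.update x i₀ a) (Function.update x i₀ b) := by
  rw [Setoid.sup_eq_eqvGen] at h
  induction h with
  | rel a b hab =>
    have key : ∀ (T : ∀ i, Setoid (D i)), T i₀ a b →
        boxProd T (Function.update x i₀ a) (Function.update x i₀ b) := by
      intro T hT j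
      rcases eq_or_ne j i₀ with rfl | hj
      · simpa using hT
      · simp [Function.update_of_ne hj]
    cases hab with
    | inl h => exact Setoid.le_def.mp le_sup_left (key R h)
    | inr h => exact Setoid.le_def.mp le_sup_right (key S h)
  | refl a => exact (boxProd R ⊔ boxProd S).refl _
  | symm a b _ ih => exact (boxProd R ⊔ boxProd S).symm ih
  | trans a b c _ _ ih1 ih2 => exact (boxProd R ⊔ boxProd S).trans ih1 ih2

/-- the join (in the lattice of equivalence relations, i.e. transitive
closure of union) of two box products is the box product of the componentwise joins. -/
theorem boxProd_sup {n : ℕ} {D : Fin (n + 1) → Type*}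
    (R S : ∀ i, Setoid (D i)) :
    boxProd R ⊔ boxProd S = boxProd (fun i => R i ⊔ S i) := by
  apply le_antisymm
  · apply sup_le
    · exact Setoid.le_def.mpr fun h i => Setoid.le_def.mp le_sup_left (h i)
    · exact Setoid.le_def.mpr fun h i => Setoid.le_def.mp le_sup_right (h i)
  · rw [Setoid.le_def]
    intro u v h
    set T := boxProd R ⊔ boxProd S with hT
    let w : ℕ → ∀ i, D i := fun k i => if (i : ℕ) < k then v i else u i
    have step : ∀ k, T (w k) (w (k + 1)) := by
      intro k
      by_cases hk : k < n + 1
      · set i₀ : Fin (n + 1) := ⟨k, hk⟩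
        have e1 : w k = Function.update (w k) i₀ (u i₀) := by
          funext j
          rcases eq_or_ne j i₀ with rfl | hj
          · simp [w, i₀]
          · simp [Function.update_of_ne hj]
        have e2 : w (k + 1) = Function.update (w k) i₀ (v i₀) := by
          funext j
          rcases eq_or_ne j i₀ with rfl | hj
          · simp [w, i₀]
          · have hjk : (j : ℕ) ≠ k := fun hc => hj (Fin.ext hc)
            have : (j : ℕ) < k + 1 ↔ (j : ℕ) < k := by omega
            simp [w, Function.update_of_ne hj, this]
        rw [e1, e2]
        exact boxProd_single R S i₀ (h i₀) (w k)
      · have : w k = w (k + 1) := by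
          funext j
          have : (j : ℕ) < k ↔ (j : ℕ) < k + 1 := by have := j.isLt; omega
          simp [w, this]
        exact this ▸ T.refl (w k)
    have chain : ∀ k, T (w 0) (w k) := by
      intro k
      induction k with
      | zero => exact T.refl _
      | succ k ih => exact T.trans ih (step k)
    have e0 : w 0 = u := by funext j; simp [w]
    have en : w (n + 1) = v := by
      funext j; simp [w, j.isLt]
    rw [← e0, ← en]
    exact chain (n + 1)
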